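/- Let d ≥ 1. For a finite signed Borel measure ρ on ℝ^d whose total variation has finite first moment, write ∫ f dρ := ∫ f dρ⁺ − ∫ f dρ⁻ via the Jordan decomposition ρ = ρ⁺ − ρ⁻, and define ‖ρ‖_{W₁} := sup { |∫ f dρ| : f : ℝ^d → ℝ is 1-Lipschitz and |f(0)| ≤ 1 }. Let C be the set of such signed measures ρ with ∫ f dρ ≥ 0 for every nonnegative 1-Lipschitz increasing f. Then C has empty interior: for every μ ∈ C and every ε > 0 there exists a finite signed Borel measure ν with finite first moment such that ‖μ − ν‖_{W₁} < ε and ν ∉ C. -/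

import Mathlib

open MeasureTheory
open scoped NNReal ENNReal

/-- The Euclidean norm on `ℝ^d = Fin d → ℝ`. -/
noncomputable def eucNorm (d : ℕ) (x : Fin d → ℝ) : ℝ :=
  Real.sqrt (∑ i, (x i) ^ 2)

/-- `f` is `1`-Lipschitz for the Euclidean norm on `ℝ^d`. -/
def Lip1 (d : ℕ) (f : (Fin d → ℝ) → ℝ) : Prop :=
  ∀ x y, |f x - f y| ≤ eucNorm d (x - y)

/-- The integral of `f` against a finite signed Borel measure `ρ`, via the Jordan
decomposition `ρ = ρ⁺ − ρ⁻`. -/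
noncomputable def signedIntegral {d : ℕ} (ρ : SignedMeasure (Fin d → ℝ))
    (f : (Fin d → ℝ) → ℝ) : ℝ :=
  ∫ x, f x ∂ρ.toJordanDecomposition.posPart - ∫ x, f x ∂ρ.toJordanDecomposition.negPart

/-- The Kantorovich-type norm `‖ρ‖_{W₁} = sup {|∫ f dρ| : f 1-Lipschitz, |f 0| ≤ 1}`. -/
noncomputable def W1norm {d : ℕ} (ρ : SignedMeasure (Fin d → ℝ)) : ℝ :=
  sSup {r : ℝ | ∃ f : (Fin d → ℝ) → ℝ, Lip1 d f ∧ |f 0| ≤ 1 ∧ r = |signedIntegral ρ f|}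

/-- The cone `C` of finite signed Borel measures `ρ` with
`∫ f dρ ≥ 0` for every nonnegative `1`-Lipschitz increasing `f`. -/
def coneC (d : ℕ) : Set (SignedMeasure (Fin d → ℝ)) :=
  {ρ | ∀ f : (Fin d → ℝ) → ℝ, (∀ x, 0 ≤ f x) → Lip1 d f → Monotone f →
    0 ≤ signedIntegral ρ f}

section Aux

variable {α : Type*} [MeasurableSpace α]

lemma jordan_apply (ρ : SignedMeasure α) {E : Set α} (hE : MeasurableSet E) :
    ρ E = (ρ.toJordanDecomposition.posPart E).toReal
        - (ρ.toJordanDecomposition.negPart E).toReal := by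
  conv_lhs => rw [← ρ.toSignedMeasure_toJordanDecomposition]
  rw [JordanDecomposition.toSignedMeasure, VectorMeasure.sub_apply,
    Measure.toSignedMeasure_apply_measurable hE, Measure.toSignedMeasure_apply_measurable hE]
  rfl

lemma repr_measure_eq (ρ : SignedMeasure α) (A B : Measure α)
    [IsFiniteMeasure A] [IsFiniteMeasure B]
    (h : ∀ E, MeasurableSet E → ρ E = (A E).toReal - (B E).toReal) :
    ρ.toJordanDecomposition.posPart + B = A + ρ.toJordanDecomposition.negPart := by
  ext E hE
  have h1 := jordan_apply ρ hE
  have h2 := h E hE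
  have hA := measure_ne_top A E
  have hB := measure_ne_top B E
  have hP := measure_ne_top ρ.toJordanDecomposition.posPart E
  have hN := measure_ne_top ρ.toJordanDecomposition.negPart E
  rw [Measure.add_apply, Measure.add_apply]
  have key : ((ρ.toJordanDecomposition.posPart E + B E).toReal : ℝ)
      = (A E + ρ.toJordanDecomposition.negPart E).toReal := by
    rw [ENNReal.toReal_add hP hB, ENNReal.toReal_add hA hN]; linarith
  exact (ENNReal.toReal_eq_toReal_iff' (by finiteness) (by finiteness)).mp key

lemma repr_pos_le (ρ : SignedMeasure α) (A B : Measure α)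
    [IsFiniteMeasure A] [IsFiniteMeasure B]
    (h : ∀ E, MeasurableSet E → ρ E = (A E).toReal - (B E).toReal) :
    ρ.toJordanDecomposition.posPart ≤ A ∧ ρ.toJordanDecomposition.negPart ≤ B := by
  have heq := repr_measure_eq ρ A B h
  obtain ⟨S, hS, hpS, hnS⟩ := ρ.toJordanDecomposition.mutuallySingular
  constructor
  · rw [Measure.le_iff]
    intro E hE
    have hsplit : ρ.toJordanDecomposition.posPart E = ρ.toJordanDecomposition.posPart (E \ S) := by
      have : ρ.toJordanDecomposition.posPart (E ∩ S) = 0 :=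
        measure_mono_null Set.inter_subset_right hpS
      conv_lhs => rw [← Set.inter_union_diff E S]
      rw [measure_union (Set.disjoint_sdiff_right.mono_left
        Set.inter_subset_right) (hE.diff hS), this, zero_add]
    have hneg0 : ρ.toJordanDecomposition.negPart (E \ S) = 0 :=
      measure_mono_null (Set.diff_subset_iff.mpr (by simp [Set.union_comm])) hnS
    have happ : ρ.toJordanDecomposition.posPart (E \ S) + B (E \ S)
        = A (E \ S) + ρ.toJordanDecomposition.negPart (E \ S) := by
      simpa [Measure.add_apply] using congrArg (fun m : Measure α => m (E \ S)) heq
    rw [hsplit]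
    calc ρ.toJordanDecomposition.posPart (E \ S)
        ≤ ρ.toJordanDecomposition.posPart (E \ S) + B (E \ S) := le_self_add
      _ = A (E \ S) + ρ.toJordanDecomposition.negPart (E \ S) := happ
      _ = A (E \ S) := by rw [hneg0, add_zero]
      _ ≤ A E := measure_mono Set.diff_subset
  · rw [Measure.le_iff]
    intro E hE
    have hsplit : ρ.toJordanDecomposition.negPart E = ρ.toJordanDecomposition.negPart (E ∩ S) := by
      have : ρ.toJordanDecomposition.negPart (E \ S) = 0 :=
        measure_mono_null (Set.diff_subset_iff.mpr (by simp [Set.union_comm])) hnS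
      conv_lhs => rw [← Set.inter_union_diff E S]
      rw [measure_union (Set.disjoint_sdiff_right.mono_left
        Set.inter_subset_right) (hE.diff hS), this, add_zero]
    have hpos0 : ρ.toJordanDecomposition.posPart (E ∩ S) = 0 :=
      measure_mono_null Set.inter_subset_right hpS
    have happ : ρ.toJordanDecomposition.posPart (E ∩ S) + B (E ∩ S)
        = A (E ∩ S) + ρ.toJordanDecomposition.negPart (E ∩ S) := by
      simpa [Measure.add_apply] using congrArg (fun m : Measure α => m (E ∩ S)) heq
    rw [hsplit]
    calc ρ.toJordanDecomposition.negPart (E ∩ S)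
        ≤ A (E ∩ S) + ρ.toJordanDecomposition.negPart (E ∩ S) := le_add_self
      _ = ρ.toJordanDecomposition.posPart (E ∩ S) + B (E ∩ S) := happ.symm
      _ = B (E ∩ S) := by rw [hpos0, zero_add]
      _ ≤ B E := measure_mono Set.inter_subset_left

lemma repr_integral (ρ : SignedMeasure α) (A B : Measure α)
    [IsFiniteMeasure A] [IsFiniteMeasure B]
    (h : ∀ E, MeasurableSet E → ρ E = (A E).toReal - (B E).toReal)
    (f : α → ℝ) (hA : Integrable f A) (hB : Integrable f B) :
    (∫ x, f x ∂ρ.toJordanDecomposition.posPart) - ∫ x, f x ∂ρ.toJordanDecomposition.negPart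
      = (∫ x, f x ∂A) - ∫ x, f x ∂B := by
  obtain ⟨hPA, hNB⟩ := repr_pos_le ρ A B h
  have hP : Integrable f ρ.toJordanDecomposition.posPart := hA.mono_measure hPA
  have hN : Integrable f ρ.toJordanDecomposition.negPart := hB.mono_measure hNB
  have heq := repr_measure_eq ρ A B h
  have : (∫ x, f x ∂(ρ.toJordanDecomposition.posPart + B))
      = ∫ x, f x ∂(A + ρ.toJordanDecomposition.negPart) := by rw [heq]
  rw [integral_add_measure hP hB, integral_add_measure hA hN] at this
  linarith

end Aux

lemma integrable_dirac' {d : ℕ} (f : (Fin d → ℝ) → ℝ) (p : Fin d → ℝ) :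
    Integrable f (Measure.dirac p) := by
  have h : f =ᵐ[Measure.dirac p] fun _ => f p := by
    rw [MeasureTheory.ae_dirac_eq]; exact Filter.eventually_pure.mpr rfl
  exact (integrable_const (f p)).congr h.symm

lemma abs_coord_le_eucNorm {d : ℕ} (x : Fin d → ℝ) (i : Fin d) : |x i| ≤ eucNorm d x := by
  rw [eucNorm, ← Real.sqrt_sq_eq_abs]
  exact Real.sqrt_le_sqrt (Finset.single_le_sum (fun j _ => sq_nonneg (x j)) (Finset.mem_univ i))

lemma lip1_coord {d : ℕ} (i : Fin d) (rr : ℝ) :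
    Lip1 d (fun x => max (x i - rr) 0) := by
  intro x y
  refine le_trans ?_ (abs_coord_le_eucNorm (x - y) i)
  have h := abs_max_sub_max_le_abs (x i - rr) (y i - rr) 0
  simpa [Pi.sub_apply] using h.trans_eq (by ring_nf)

lemma eucNorm_const_one {d : ℕ} : eucNorm d (fun _ => (1 : ℝ)) = Real.sqrt d := by
  simp [eucNorm]

lemma integral_nnreal_dirac {d : ℕ} (f : (Fin d → ℝ) → ℝ) (p : Fin d → ℝ) (r : ℝ≥0) :
    ∫ x, f x ∂((r • Measure.dirac p : Measure (Fin d → ℝ))) = (r : ℝ) * f p := by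
  have : (r • Measure.dirac p : Measure (Fin d → ℝ)) = ((r : ℝ≥0∞) • Measure.dirac p) := rfl
  rw [this, integral_smul_measure, integral_dirac]
  simp [smul_eq_mul]

lemma integrable_nnreal_dirac {d : ℕ} (f : (Fin d → ℝ) → ℝ) (p : Fin d → ℝ) (r : ℝ≥0) :
    Integrable f ((r • Measure.dirac p : Measure (Fin d → ℝ))) := by
  have : (r • Measure.dirac p : Measure (Fin d → ℝ)) = ((r : ℝ≥0∞) • Measure.dirac p) := rfl
  rw [this]
  exact (integrable_dirac' f p).smul_measure ENNReal.coe_ne_top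

lemma cut_le_eucNorm {d : ℕ} (i0 : Fin d) (n : ℕ) (x : Fin d → ℝ) :
    ‖max (x i0 - (n : ℝ)) 0‖ ≤ ‖eucNorm d x‖ := by
  have h1 : max (x i0 - (n : ℝ)) 0 ≤ |x i0| := by
    rcases le_total (x i0 - (n : ℝ)) 0 with h | h
    · simp [max_eq_right h, abs_nonneg]
    · rw [max_eq_left h]
      have hn : (0:ℝ) ≤ n := Nat.cast_nonneg n
      have : x i0 - (n : ℝ) ≤ x i0 := by linarith
      exact this.trans (le_abs_self _)
  rw [Real.norm_of_nonneg (le_max_right _ _), Real.norm_of_nonneg]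
  · exact h1.trans (abs_coord_le_eucNorm x i0)
  · exact Real.sqrt_nonneg _

lemma integrable_cut {d : ℕ} (i0 : Fin d) (n : ℕ) {P : Measure (Fin d → ℝ)}
    (hP : Integrable (fun x => eucNorm d x) P) :
    Integrable (fun x : Fin d → ℝ => max (x i0 - (n : ℝ)) 0) P := by
  have hcont : Continuous (fun x : Fin d → ℝ => max (x i0 - (n : ℝ)) 0) :=
    ((continuous_apply i0).sub continuous_const).max continuous_const
  exact hP.mono hcont.aestronglyMeasurable
    (Filter.Eventually.of_forall fun x => cut_le_eucNorm i0 n x)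

lemma exists_tail_small {d : ℕ} (i0 : Fin d) (P : Measure (Fin d → ℝ)) [IsFiniteMeasure P]
    (hP : Integrable (fun x => eucNorm d x) P) {δ : ℝ} (hδ : 0 < δ) :
    ∃ n : ℕ, ∫ x, max (x i0 - n) 0 ∂P < δ := by
  have hcont : ∀ n : ℕ, Continuous (fun x : Fin d → ℝ => max (x i0 - (n : ℝ)) 0) :=
    fun n => ((continuous_apply i0).sub continuous_const).max continuous_const
  have htend : Filter.Tendsto (fun n : ℕ => ∫ x, max (x i0 - (n : ℝ)) 0 ∂P)
      Filter.atTop (nhds (∫ _x, (0 : ℝ) ∂P)) := by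
    apply tendsto_integral_of_dominated_convergence (fun x => eucNorm d x)
      (fun n => (hcont n).aestronglyMeasurable) hP
    · intro n
      filter_upwards with x
      exact (cut_le_eucNorm i0 n x).trans_eq (Real.norm_of_nonneg (Real.sqrt_nonneg _))
    · filter_upwards with x
      apply Filter.Tendsto.congr' (f₁ := fun _ : ℕ => (0 : ℝ))
      · filter_upwards [Filter.eventually_ge_atTop ⌈x i0⌉₊] with n hn
        have : x i0 - (n : ℝ) ≤ 0 := by
          have := (Nat.le_ceil (x i0)).trans (Nat.cast_le.mpr hn)
          linarith
        simp [max_eq_right this]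
      · exact tendsto_const_nhds
  rw [integral_zero] at htend
  exact (htend.eventually (eventually_lt_nhds hδ)).exists

/-- The cone `C` has empty interior in the Kantorovich-type norm `‖·‖_{W₁}`: every
`μ ∈ C` with finite first moment is approximated arbitrarily well by signed measures
with finite first moments lying outside `C`. -/
theorem cone_has_empty_interior
    (d : ℕ) (hd : 1 ≤ d)
    (μ : SignedMeasure (Fin d → ℝ)) (hμC : μ ∈ coneC d)
    (hμ_mom : Integrable (fun x => eucNorm d x) μ.totalVariation)
    (ε : ℝ) (hε : 0 < ε) :
    ∃ ν : SignedMeasure (Fin d → ℝ),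
      Integrable (fun x => eucNorm d x) ν.totalVariation ∧
      W1norm (μ - ν) < ε ∧ ν ∉ coneC d := by
  classical
  set i0 : Fin d := ⟨0, hd⟩
  set P := μ.toJordanDecomposition.posPart with hPdef
  set N := μ.toJordanDecomposition.negPart with hNdef
  have htv : μ.totalVariation = P + N := rfl
  have hPle : P ≤ μ.totalVariation := by rw [htv]; exact Measure.le_add_right le_rfl
  have hNle : N ≤ μ.totalVariation := by rw [htv]; exact Measure.le_add_left le_rfl
  have hPmom : Integrable (fun x => eucNorm d x) P := hμ_mom.mono_measure hPle
  have hNmom : Integrable (fun x => eucNorm d x) N := hμ_mom.mono_measure hNle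
  have hsd : (0:ℝ) ≤ Real.sqrt d := Real.sqrt_nonneg d
  set δ : ℝ := ε / (Real.sqrt d + 1) with hδdef
  have hδ : 0 < δ := div_pos hε (by linarith)
  obtain ⟨n, hn⟩ := exists_tail_small i0 P hPmom hδ
  set r : ℝ≥0 := δ.toNNReal with hrdef
  have hr : (r : ℝ) = δ := Real.coe_toNNReal δ hδ.le
  set p : Fin d → ℝ := fun _ => (n : ℝ) + 1 with hpdef
  set q : Fin d → ℝ := fun _ => (n : ℝ) with hqdef
  set Dp : Measure (Fin d → ℝ) := r • Measure.dirac p with hDpdef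
  set Dq : Measure (Fin d → ℝ) := r • Measure.dirac q with hDqdef
  set ν : SignedMeasure (Fin d → ℝ) := μ - Dp.toSignedMeasure + Dq.toSignedMeasure with hνdef
  have hreprν : ∀ E, MeasurableSet E → ν E = ((P + Dq) E).toReal - ((N + Dp) E).toReal := by
    intro E hE
    have h1 : ν E = μ E - (Dp E).toReal + (Dq E).toReal := by
      rw [hνdef, VectorMeasure.add_apply, VectorMeasure.sub_apply,
        Measure.toSignedMeasure_apply_measurable hE, Measure.toSignedMeasure_apply_measurable hE]
      rfl
    rw [h1, jordan_apply μ hE, Measure.add_apply, Measure.add_apply,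
      ENNReal.toReal_add (measure_ne_top _ _) (measure_ne_top _ _),
      ENNReal.toReal_add (measure_ne_top _ _) (measure_ne_top _ _)]
    ring
  have hμν : μ - ν = Dp.toSignedMeasure - Dq.toSignedMeasure := by
    rw [hνdef]; abel
  have hreprσ : ∀ E, MeasurableSet E → (μ - ν) E = (Dp E).toReal - (Dq E).toReal := by
    intro E hE
    rw [hμν, VectorMeasure.sub_apply, Measure.toSignedMeasure_apply_measurable hE,
      Measure.toSignedMeasure_apply_measurable hE]
    rfl
  refine ⟨ν, ?_, ?_, ?_⟩
  · -- finite first moment of ν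
    obtain ⟨hp1, hp2⟩ := repr_pos_le ν (P + Dq) (N + Dp) hreprν
    have hIA : Integrable (fun x => eucNorm d x) (P + Dq) :=
      integrable_add_measure.mpr ⟨hPmom, integrable_nnreal_dirac _ q r⟩
    have hIB : Integrable (fun x => eucNorm d x) (N + Dp) :=
      integrable_add_measure.mpr ⟨hNmom, integrable_nnreal_dirac _ p r⟩
    have hle : ν.totalVariation ≤ (P + Dq) + (N + Dp) := by
      rw [SignedMeasure.totalVariation]
      exact add_le_add hp1 hp2
    exact (integrable_add_measure.mpr ⟨hIA, hIB⟩).mono_measure hle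
  · -- W1 bound
    have hW : W1norm (μ - ν) ≤ δ * Real.sqrt d := by
      apply Real.sSup_le
      · rintro x ⟨f, hf, hf0, rfl⟩
        have hint := repr_integral (μ - ν) Dp Dq hreprσ f
          (integrable_nnreal_dirac f p r) (integrable_nnreal_dirac f q r)
        have hval : signedIntegral (μ - ν) f = δ * f p - δ * f q := by
          rw [signedIntegral, hint, hDpdef, hDqdef, integral_nnreal_dirac,
            integral_nnreal_dirac, hr]
        rw [hval, ← mul_sub, abs_mul, abs_of_nonneg hδ.le]
        have h3 := hf p q
        have h4 : p - q = fun _ => (1 : ℝ) := by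
          funext j; simp [hpdef, hqdef]
        rw [h4, eucNorm_const_one] at h3
        exact mul_le_mul_of_nonneg_left h3 hδ.le
      · positivity
    have hlt : δ * Real.sqrt d < ε := by
      have heq : δ * (Real.sqrt d + 1) = ε := by
        rw [hδdef]; field_simp
      nlinarith
    exact lt_of_le_of_lt hW hlt
  · -- ν outside the cone
    intro hν
    set f : (Fin d → ℝ) → ℝ := fun x => max (x i0 - (n : ℝ)) 0 with hfdef
    have hnn : ∀ x, 0 ≤ f x := fun x => le_max_right _ _
    have hlip : Lip1 d f := lip1_coord i0 (n : ℝ)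
    have hmono : Monotone f := by
      intro x y hxy
      exact max_le_max (sub_le_sub_right (hxy i0) _) le_rfl
    have hfP : Integrable f P := integrable_cut i0 n hPmom
    have hfN : Integrable f N := integrable_cut i0 n hNmom
    have hint := repr_integral ν (P + Dq) (N + Dp) hreprν f
      (integrable_add_measure.mpr ⟨hfP, integrable_nnreal_dirac f q r⟩)
      (integrable_add_measure.mpr ⟨hfN, integrable_nnreal_dirac f p r⟩)
    have hval : signedIntegral ν f
        = ((∫ x, f x ∂P) + δ * f q) - ((∫ x, f x ∂N) + δ * f p) := by
      rw [signedIntegral, hint,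
        integral_add_measure hfP (integrable_nnreal_dirac f q r),
        integral_add_measure hfN (integrable_nnreal_dirac f p r),
        integral_nnreal_dirac, integral_nnreal_dirac, hr]
    have hfq : f q = 0 := by simp [hfdef, hqdef]
    have hfp : f p = 1 := by
      simp [hfdef, hpdef]
    have hNnn : (0:ℝ) ≤ ∫ x, f x ∂N := integral_nonneg hnn
    have hpos := hν f hnn hlip hmono
    rw [hval, hfq, hfp] at hpos
    have hPn : (∫ x, f x ∂P) < δ := hn
    linarith
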